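/- Let V be a positive natural number, P, Q : Fin V → ℝ probability vectors with Q strictly positive, and let τ ∈ (0,1]. Let A ⊆ Fin V be a nonempty set such that min{P(v), Q(v)} ≥ τ for every v ∈ A. Then the conditional distributions P|A(v) = P(v)·1_A(v)/P(A) and Q|A(v) = Q(v)·1_A(v)/Q(A) are well defined, and TV(P|A, Q|A) ≤ (1/τ) · sqrt( (1/2) · KL(P ‖ Q) ), where KL(P ‖ Q) = ∑_{v} P(v)·log(P(v)/Q(v)) with the convention 0·log 0 = 0. -/

import Mathlib

open Finset

/-- Total variation distance between two probability vectors on `Fin V`. -/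
noncomputable def TV {V : ℕ} (P Q : Fin V → ℝ) : ℝ := (1 / 2) * ∑ v, |P v - Q v|

/-- The conditional (restricted) distribution of `P` given a set `A`. -/
noncomputable def condDist {V : ℕ} (P : Fin V → ℝ) (A : Finset (Fin V)) : Fin V → ℝ :=
  fun v => P v * (if v ∈ A then 1 else 0) / ∑ u ∈ A, P u

/-- Kullback–Leibler divergence (with the convention `0 · log 0 = 0`, which is
automatic since `0 * x = 0`). -/
noncomputable def KL {V : ℕ} (P Q : Fin V → ℝ) : ℝ := ∑ v, P v * Real.log (P v / Q v)

/- ### Auxiliary lemmas -/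

lemma pade_mono : MonotoneOn (fun x : ℝ => Real.log x - 2*(x-1)/(x+1)) (Set.Ioi 0) := by
  have hint : interior (Set.Ioi (0:ℝ)) = Set.Ioi 0 := interior_Ioi
  apply monotoneOn_of_hasDerivWithinAt_nonneg (f' := fun x => 1/x - (2*(x+1) - 2*(x-1))/(x+1)^2)
    (convex_Ioi 0)
  · intro x hx
    have hx0 : (0:ℝ) < x := hx
    exact ((Real.continuousOn_log.mono (by intro y hy; exact ne_of_gt hy)).sub
      (((continuousOn_const.mul (continuousOn_id.sub continuousOn_const))).div
        (continuousOn_id.add continuousOn_const)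
        (fun y hy => by have : (0:ℝ) < y := hy; show y + 1 ≠ 0; positivity))).continuousWithinAt hx
  · intro x hx
    rw [hint] at hx
    have hx0 : (0:ℝ) < x := hx
    have h1 : HasDerivAt Real.log (1/x) x := by
      simpa [one_div] using Real.hasDerivAt_log (ne_of_gt hx0)
    have h2 : HasDerivAt (fun x : ℝ => 2*(x-1)/(x+1)) ((2*(x+1) - 2*(x-1))/(x+1)^2) x := by
      have hnum : HasDerivAt (fun x : ℝ => 2*(x-1)) 2 x := by
        simpa using ((hasDerivAt_id x).sub_const 1).const_mul 2
      have hden : HasDerivAt (fun x : ℝ => x+1) 1 x := (hasDerivAt_id x).add_const 1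
      have := hnum.fun_div hden (by positivity)
      simpa [mul_comm] using this
    exact ((h1.sub h2).hasDerivWithinAt)
  · intro x hx
    rw [hint] at hx
    have hx0 : (0:ℝ) < x := hx
    have h : (1/x - (2*(x+1) - 2*(x-1))/(x+1)^2) = (x-1)^2/(x*(x+1)^2) := by
      field_simp; ring
    rw [h]; positivity

lemma log_ge_pade {x : ℝ} (hx : 1 ≤ x) : 2*(x-1)/(x+1) ≤ Real.log x := by
  have := pade_mono (Set.mem_Ioi.2 one_pos) (Set.mem_Ioi.2 (lt_of_lt_of_le one_pos hx)) hx
  simp only [Real.log_one] at this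
  linarith [this]

lemma log_le_pade {x : ℝ} (hx0 : 0 < x) (hx : x ≤ 1) : Real.log x ≤ 2*(x-1)/(x+1) := by
  have := pade_mono (Set.mem_Ioi.2 hx0) (Set.mem_Ioi.2 one_pos) hx
  simp only [Real.log_one] at this
  linarith [this]

noncomputable def phi (x : ℝ) : ℝ := x * Real.log x - x + 1 - 3/2 * ((x-1)^2/(x+2))

lemma phi_hasDeriv {x : ℝ} (hx : 0 < x) :
    HasDerivAt phi (Real.log x + 1 - 1 - 3/2 * ((2*(x-1)*(x+2) - (x-1)^2*1)/(x+2)^2)) x := by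
  have h1 : HasDerivAt (fun y : ℝ => y * Real.log y) (Real.log x + 1) x :=
    Real.hasDerivAt_mul_log (ne_of_gt hx)
  have hnum : HasDerivAt (fun y : ℝ => (y-1)^2) (2*(x-1)) x := by
    simpa [mul_comm] using (((hasDerivAt_id x).sub_const 1).fun_pow 2)
  have hden : HasDerivAt (fun y : ℝ => y+2) 1 x := (hasDerivAt_id x).add_const 2
  have h2 : HasDerivAt (fun y : ℝ => (y-1)^2/(y+2))
      ((2*(x-1)*(x+2) - (x-1)^2*1)/(x+2)^2) x := hnum.div hden (by positivity)
  exact ((h1.fun_sub (hasDerivAt_id x)).add_const 1).fun_sub (h2.const_mul (3/2))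

lemma phi_cont {s : Set ℝ} (hs : ∀ y ∈ s, 0 < y) : ContinuousOn phi s := by
  apply ContinuousOn.sub
  · apply ContinuousOn.add
    · apply ContinuousOn.sub
      · exact continuousOn_id.mul (Real.continuousOn_log.mono (fun y hy => ne_of_gt (hs y hy)))
      · exact continuousOn_id
    · exact continuousOn_const
  · exact continuousOn_const.mul
      (((continuousOn_id.sub continuousOn_const).pow 2).div
        (continuousOn_id.add continuousOn_const)
        (fun y hy => by have := hs y hy; positivity))

lemma phi_nonneg {x : ℝ} (hx : 0 < x) : 0 ≤ phi x := by
  have hphi1 : phi 1 = 0 := by simp [phi]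
  rcases le_or_gt 1 x with h1 | h1
  · have hmono : MonotoneOn phi (Set.Ici 1) := by
      apply monotoneOn_of_hasDerivWithinAt_nonneg (convex_Ici 1)
        (phi_cont (fun y hy => lt_of_lt_of_le one_pos hy))
        (f' := fun x => Real.log x + 1 - 1 - 3/2 * ((2*(x-1)*(x+2) - (x-1)^2*1)/(x+2)^2))
      · intro y hy
        rw [interior_Ici] at hy
        exact (phi_hasDeriv (lt_trans one_pos hy)).hasDerivWithinAt
      · intro y hy
        rw [interior_Ici] at hy
        have hy1 : (1:ℝ) ≤ y := le_of_lt hy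
        have hp := log_ge_pade hy1
        have key : 3/2 * ((2*(y-1)*(y+2) - (y-1)^2*1)/(y+2)^2) ≤ 2*(y-1)/(y+1) := by
          rw [mul_div_assoc', div_le_div_iff₀ (by positivity) (by positivity)]
          have hc : 0 ≤ (y-1)^3 := pow_nonneg (by linarith) 3
          nlinarith [hc]
        linarith
    have := hmono (Set.mem_Ici.2 le_rfl) (Set.mem_Ici.2 h1) h1
    linarith [this, hphi1.ge]
  · have hanti : AntitoneOn phi (Set.Ioc 0 1) := by
      apply antitoneOn_of_hasDerivWithinAt_nonpos (convex_Ioc 0 1)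
        (phi_cont (fun y hy => hy.1))
        (f' := fun x => Real.log x + 1 - 1 - 3/2 * ((2*(x-1)*(x+2) - (x-1)^2*1)/(x+2)^2))
      · intro y hy
        rw [interior_Ioc] at hy
        exact (phi_hasDeriv hy.1).hasDerivWithinAt
      · intro y hy
        rw [interior_Ioc] at hy
        obtain ⟨hy0, hy1⟩ := hy
        have hp := log_le_pade hy0 hy1.le
        have key : 2*(y-1)/(y+1) ≤ 3/2 * ((2*(y-1)*(y+2) - (y-1)^2*1)/(y+2)^2) := by
          rw [mul_div_assoc', div_le_div_iff₀ (by positivity) (by positivity)]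
          have hc : 0 ≤ (1-y)^3 := pow_nonneg (by linarith) 3
          nlinarith [hc]
        linarith
    have := hanti (Set.mem_Ioc.2 ⟨hx, le_of_lt h1⟩) (Set.mem_Ioc.2 ⟨one_pos, le_rfl⟩)
      (le_of_lt h1)
    linarith [this, hphi1.ge]

lemma pointwise_kl {a b : ℝ} (ha : 0 ≤ a) (hb : 0 < b) :
    3*(a-b)^2/(2*(a+2*b)) ≤ a * Real.log (a/b) + b - a := by
  rcases eq_or_lt_of_le ha with rfl | ha0
  · rw [show ((0:ℝ)-b)^2 = b^2 by ring]
    rw [show (2:ℝ)*(0+2*b) = 4*b by ring]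
    rw [show (3:ℝ)*b^2/(4*b) = 3/4*b by field_simp]
    simp; linarith
  · have hx : 0 < a/b := div_pos ha0 hb
    have h := phi_nonneg hx
    unfold phi at h
    have hb' : b ≠ 0 := ne_of_gt hb
    have key : b * phi (a/b) = a * Real.log (a/b) + b - a - 3*(a-b)^2/(2*(a+2*b)) := by
      unfold phi
      have hd : a/b + 2 = (a + 2*b)/b := by field_simp
      have hd2 : (a/b - 1)^2 = (a-b)^2/b^2 := by field_simp
      rw [hd, hd2]
      have hab : 0 < a + 2*b := by linarith
      field_simp
      ring
    nlinarith [mul_nonneg hb.le (phi_nonneg hx)]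

lemma pinsker {V : ℕ} (P Q : Fin V → ℝ)
    (hP0 : ∀ v, 0 ≤ P v) (hP1 : ∑ v, P v = 1)
    (hQpos : ∀ v, 0 < Q v) (hQ1 : ∑ v, Q v = 1) :
    (∑ v, |P v - Q v|)^2 ≤ 2 * KL P Q ∧ 0 ≤ KL P Q := by
  set f : Fin V → ℝ := fun v => Real.sqrt (3*(P v - Q v)^2/(2*(P v + 2*Q v)))
  set g : Fin V → ℝ := fun v => Real.sqrt (2*(P v + 2*Q v)/3)
  have hden : ∀ v, 0 < P v + 2*Q v := fun v => by have := hP0 v; have := hQpos v; linarith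
  have harg : ∀ v, 0 ≤ 3*(P v - Q v)^2/(2*(P v + 2*Q v)) := fun v =>
    div_nonneg (by positivity) (by linarith [hden v])
  have harg2 : ∀ v, 0 ≤ 2*(P v + 2*Q v)/3 := fun v =>
    div_nonneg (by linarith [hden v]) (by norm_num)
  have hfg : ∀ v, f v * g v = |P v - Q v| := by
    intro v
    rw [← Real.sqrt_mul (harg v)]
    rw [show 3*(P v - Q v)^2/(2*(P v + 2*Q v)) * (2*(P v + 2*Q v)/3) = (P v - Q v)^2 by
      field_simp [ne_of_gt (hden v)]
      exact mul_div_cancel_right₀ _ (by linarith [hden v] : (0:ℝ) < P v + Q v * 2).ne']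
    exact Real.sqrt_sq_eq_abs _
  have hf2 : ∀ v, f v ^ 2 = 3*(P v - Q v)^2/(2*(P v + 2*Q v)) := fun v =>
    Real.sq_sqrt (harg v)
  have hg2 : ∀ v, g v ^ 2 = 2*(P v + 2*Q v)/3 := fun v => Real.sq_sqrt (harg2 v)
  have hCS := sum_mul_sq_le_sq_mul_sq univ f g
  have hsum1 : ∑ v, f v * g v = ∑ v, |P v - Q v| := Finset.sum_congr rfl fun v _ => hfg v
  have hsumg : ∑ v, g v ^ 2 = 2 := by
    rw [Finset.sum_congr rfl fun v _ => hg2 v]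
    rw [show (fun v => 2*(P v + 2*Q v)/3) = fun v => (2/3) * P v + (4/3) * Q v by
      funext v; ring]
    rw [Finset.sum_add_distrib, ← Finset.mul_sum, ← Finset.mul_sum, hP1, hQ1]
    norm_num
  have hsumf : ∑ v, f v ^ 2 ≤ KL P Q := by
    rw [Finset.sum_congr rfl fun v _ => hf2 v]
    have : KL P Q = ∑ v, (P v * Real.log (P v / Q v) + Q v - P v) := by
      unfold KL
      rw [Finset.sum_sub_distrib, Finset.sum_add_distrib, hP1, hQ1]
      ring
    rw [this]
    exact Finset.sum_le_sum fun v _ => pointwise_kl (hP0 v) (hQpos v)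
  have hf2nn : 0 ≤ ∑ v, f v ^ 2 := Finset.sum_nonneg fun v _ => sq_nonneg _
  constructor
  · calc (∑ v, |P v - Q v|)^2 = (∑ v, f v * g v)^2 := by rw [hsum1]
      _ ≤ (∑ v, f v ^ 2) * (∑ v, g v ^ 2) := hCS
      _ = (∑ v, f v ^ 2) * 2 := by rw [hsumg]
      _ ≤ KL P Q * 2 := by linarith
      _ = 2 * KL P Q := by ring
  · linarith

/-- On a common support certified at level `τ`, the conditional distributions are
well defined and their TV gap is bounded by `(1/τ) · sqrt(KL/2)`. -/
theorem tv_cond_le_pinsker (V : ℕ) (hV : 0 < V) (P Q : Fin V → ℝ)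
    (hP0 : ∀ v, 0 ≤ P v) (hP1 : ∑ v, P v = 1)
    (hQpos : ∀ v, 0 < Q v) (hQ1 : ∑ v, Q v = 1)
    (τ : ℝ) (hτ : τ ∈ Set.Ioc (0 : ℝ) 1)
    (A : Finset (Fin V)) (hA : A.Nonempty)
    (hmin : ∀ v ∈ A, τ ≤ min (P v) (Q v)) :
    0 < ∑ v ∈ A, P v ∧ 0 < ∑ v ∈ A, Q v ∧
      TV (condDist P A) (condDist Q A) ≤
        (1 / τ) * Real.sqrt ((1 / 2) * KL P Q) := by
  obtain ⟨hτ0, hτ1⟩ := hτ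
  obtain ⟨v₀, hv₀⟩ := hA
  set p := ∑ v ∈ A, P v with hp_def
  set q := ∑ v ∈ A, Q v with hq_def
  have hτp : τ ≤ p := le_trans (le_trans (hmin v₀ hv₀) (min_le_left _ _))
    (Finset.single_le_sum (fun v _ => hP0 v) hv₀)
  have hτq : τ ≤ q := le_trans (le_trans (hmin v₀ hv₀) (min_le_right _ _))
    (Finset.single_le_sum (fun v _ => (hQpos v).le) hv₀)
  have hp0 : 0 < p := lt_of_lt_of_le hτ0 hτp
  have hq0 : 0 < q := lt_of_lt_of_le hτ0 hτq
  refine ⟨hp0, hq0, ?_⟩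
  -- Pinsker bound on TV P Q
  obtain ⟨hpin, hKL0⟩ := pinsker P Q hP0 hP1 hQpos hQ1
  have hSnn : 0 ≤ ∑ v, |P v - Q v| := Finset.sum_nonneg fun v _ => abs_nonneg _
  have hTVle : TV P Q ≤ Real.sqrt ((1 / 2) * KL P Q) := by
    rw [TV, show (1:ℝ)/2 * (∑ v, |P v - Q v|) = (∑ v, |P v - Q v|)/2 by ring]
    rw [Real.le_sqrt (by positivity) (by linarith)]
    rw [div_pow]
    nlinarith [hpin]
  have hTVnn : 0 ≤ TV P Q := by
    rw [TV]; positivity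
  -- conditional TV bound : TV cond ≤ (1/p) * TV P Q
  have hsum_eq : ∑ v, |condDist P A v - condDist Q A v|
      = ∑ v ∈ A, |P v / p - Q v / q| := by
    rw [← Finset.sum_subset (Finset.subset_univ A)]
    · exact Finset.sum_congr rfl fun v hv => by simp [condDist, hv, hp_def, hq_def]
    · intro v _ hv
      simp [condDist, hv]
  have hqp : |q - p| ≤ ∑ v ∈ Aᶜ, |P v - Q v| := by
    have h1 : q - p = ∑ v ∈ A, (Q v - P v) := by
      rw [hp_def, hq_def, Finset.sum_sub_distrib]
    have h2 : (∑ v ∈ A, (Q v - P v)) + (∑ v ∈ Aᶜ, (Q v - P v)) = 0 := by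
      rw [Finset.sum_add_sum_compl, Finset.sum_sub_distrib, hP1, hQ1]
      ring
    have h3 : q - p = ∑ v ∈ Aᶜ, (P v - Q v) := by
      rw [h1]
      have : ∑ v ∈ Aᶜ, (P v - Q v) = - ∑ v ∈ Aᶜ, (Q v - P v) := by
        rw [← Finset.sum_neg_distrib]
        exact Finset.sum_congr rfl fun v _ => by ring
      linarith [h2, this]
    rw [h3]
    exact Finset.abs_sum_le_sum_abs _ _
  have hptwise : ∀ v ∈ A, |P v / p - Q v / q|
      ≤ |P v - Q v| / p + Q v * (|q - p| / (p * q)) := by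
    intro v hv
    have hsplit : P v / p - Q v / q = (P v - Q v)/p + Q v * ((q - p)/(p*q)) := by
      field_simp
      ring
    rw [hsplit]
    calc |(P v - Q v)/p + Q v * ((q - p)/(p*q))|
        ≤ |(P v - Q v)/p| + |Q v * ((q - p)/(p*q))| := abs_add_le _ _
      _ = |P v - Q v| / p + Q v * (|q - p| / (p * q)) := by
          rw [abs_div, abs_of_pos hp0, abs_mul, abs_of_pos (hQpos v), abs_div,
            abs_of_pos (mul_pos hp0 hq0)]
  have hsumA : ∑ v ∈ A, |P v / p - Q v / q|
      ≤ (∑ v ∈ A, |P v - Q v|) / p + |q - p| / p := by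
    calc ∑ v ∈ A, |P v / p - Q v / q|
        ≤ ∑ v ∈ A, (|P v - Q v| / p + Q v * (|q - p| / (p * q))) :=
          Finset.sum_le_sum hptwise
      _ = (∑ v ∈ A, |P v - Q v|) / p + q * (|q - p| / (p * q)) := by
          rw [Finset.sum_add_distrib, ← Finset.sum_div, ← Finset.sum_mul]
      _ = (∑ v ∈ A, |P v - Q v|) / p + |q - p| / p := by
          congr 1
          field_simp
  have hsplit_univ : (∑ v ∈ A, |P v - Q v|) + (∑ v ∈ Aᶜ, |P v - Q v|)
      = ∑ v, |P v - Q v| := Finset.sum_add_sum_compl A _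
  have hcond_le : TV (condDist P A) (condDist Q A) ≤ (1/p) * TV P Q := by
    rw [TV, TV, hsum_eq]
    have : (∑ v ∈ A, |P v - Q v|) / p + |q - p| / p ≤ (∑ v, |P v - Q v|) / p := by
      rw [← add_div, div_le_div_iff₀ hp0 hp0]
      have := hqp
      nlinarith [hsplit_univ, hp0]
    calc (1:ℝ)/2 * ∑ v ∈ A, |P v / p - Q v / q|
        ≤ (1/2) * ((∑ v, |P v - Q v|) / p) := by
          have := le_trans hsumA this
          linarith
      _ = 1/p * ((1:ℝ)/2 * ∑ v, |P v - Q v|) := by ring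
  calc TV (condDist P A) (condDist Q A) ≤ (1/p) * TV P Q := hcond_le
    _ ≤ (1/τ) * TV P Q := by
        apply mul_le_mul_of_nonneg_right _ hTVnn
        exact one_div_le_one_div_of_le hτ0 hτp
    _ ≤ (1/τ) * Real.sqrt ((1/2) * KL P Q) := by
        apply mul_le_mul_of_nonneg_left hTVle (by positivity)
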